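/- Fix a vertex i of a finite set V and let B be a finite family of pairwise distinct finite subsets R ⊆ V, each containing i and at least one other vertex, with |R| ≤ k for every R ∈ B, and let u : B → ℝ with Σ_{R∈B} u_R² > 0. Let (r_j)_{j ∈ V\{i}} be i.i.d. random variables uniformly distributed on [−1,1], and set ξ = Σ_{R∈B} u_R · ∏_{j∈R, j≠i} r_j. Then for every t ∈ [0,1], E[|ξ|] ≥ ( t(1 − t²)² / 9^{k−1} ) · 3^{−(k−1)/2} · √( Σ_{R∈B} u_R² ). -/

import Mathlib

open MeasureTheory ProbabilityTheory

set_option linter.unusedSectionVars false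
set_option maxHeartbeats 1000000

namespace LocalUpdateAux

open MvPolynomial

noncomputable section


def nu : Measure ℝ := (2⁻¹ : ENNReal) • volume.restrict (Set.Icc (-1 : ℝ) 1)

instance : IsProbabilityMeasure nu := by
  constructor
  simp [nu, Real.volume_Icc]
  rw [show (1:ℝ) + 1 = 2 by norm_num]
  simp [ENNReal.ofReal_ofNat]
  exact ENNReal.inv_mul_cancel (by norm_num) (by norm_num)

noncomputable def MM (c : ℕ) : ℝ := if Even c then ((c : ℝ) + 1)⁻¹ else 0

lemma MM_zero : MM 0 = 1 := by simp [MM]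
lemma MM_one : MM 1 = 0 := by simp [MM]
lemma MM_two : MM 2 = 3⁻¹ := by norm_num [MM]
lemma MM_three : MM 3 = 0 := by simp [MM]; intro h; exact absurd h (by decide)
lemma MM_four : MM 4 = 5⁻¹ := by rw [MM, if_pos (by decide)]; norm_num

lemma integrable_pow_nu (c : ℕ) : Integrable (fun y : ℝ => y ^ c) nu := by
  rw [nu]
  refine Integrable.smul_measure ?_ (by norm_num)
  have : IntegrableOn (fun y : ℝ => y ^ c) (Set.Icc (-1:ℝ) 1) volume :=
    (continuous_pow c).continuousOn.integrableOn_compact isCompact_Icc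
  exact this

lemma integral_pow_nu (c : ℕ) : ∫ y, y ^ c ∂nu = MM c := by
  rw [nu, integral_smul_measure]
  rw [show ∫ y in Set.Icc (-1:ℝ) 1, y ^ c = ∫ y in (-1:ℝ)..1, y ^ c by
    rw [intervalIntegral.integral_of_le (by norm_num), integral_Icc_eq_integral_Ioc]]
  rw [integral_pow]
  rcases Nat.even_or_odd c with hc | hc
  · rw [MM, if_pos hc]
    rw [(hc.add_one).neg_one_pow]
    simp
    have : ((c:ℝ) + 1) ≠ 0 := by positivity
    try field_simp
    try ring
  · rw [MM, if_neg (by simpa using hc)]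
    rw [Even.neg_one_pow (by simpa using hc.add_one)]
    simp


def UU : Type := ℝ
instance : MeasurableSpace UU := inferInstanceAs (MeasurableSpace ℝ)
instance : MeasureSpace UU := ⟨nu⟩
instance : IsProbabilityMeasure (volume : Measure UU) := inferInstanceAs (IsProbabilityMeasure nu)
instance sfUU : SigmaFinite (volume : Measure UU) := inferInstance
def toR : UU → ℝ := fun y => y
lemma measurable_toR : Measurable toR := measurable_id

variable {ι : Type*} [Fintype ι] [DecidableEq ι]

instance : IsProbabilityMeasure (volume : Measure (ι → UU)) := by
  rw [MeasureTheory.volume_pi]; infer_instance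

def mono (e : ι → ℕ) : (ι → UU) → ℝ := fun x => ∏ j, toR (x j) ^ e j

lemma integrable_mono (e : ι → ℕ) : Integrable (mono e) :=
  Integrable.fintype_prod (f := fun j (y : UU) => toR y ^ e j) (μ := fun _ => (volume : Measure UU))
    (fun j => integrable_pow_nu (e j))

lemma integralMono (e : ι → ℕ) : ∫ x, mono e x = ∏ j, MM (e j) := by
  unfold mono
  rw [integral_fintype_prod_volume_eq_prod (f := fun j (y : UU) => toR y ^ e j)]
  exact Finset.prod_congr rfl fun j _ => integral_pow_nu (e j)

lemma measurable_mono (e : ι → ℕ) : Measurable (mono e) := by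
  unfold mono
  exact Finset.measurable_prod _ fun j _ =>
    ((measurable_toR.comp (measurable_pi_apply j)).pow_const (e j))

open MvPolynomial in
/-- Evaluation of a polynomial on the cube. -/
def evalU (p : MvPolynomial ι ℝ) : (ι → UU) → ℝ := fun x => eval (fun j => toR (x j)) p

open MvPolynomial Finsupp in
lemma evalU_eq (p : MvPolynomial ι ℝ) :
    evalU p = fun x => ∑ d ∈ p.support, coeff d p * mono (fun j => d j) x := by
  funext x
  rw [evalU, eval_eq]
  refine Finset.sum_congr rfl fun d _ => ?_
  congr 1
  unfold mono
  refine Finset.prod_subset (Finset.subset_univ _) fun j _ hj => ?_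
  rw [Finsupp.notMem_support_iff.mp hj, pow_zero]

lemma integrable_evalU (p : MvPolynomial ι ℝ) : Integrable (evalU p) := by
  rw [evalU_eq]
  exact integrable_finset_sum _ fun d _ => (integrable_mono _).const_mul _

lemma measurable_evalU (p : MvPolynomial ι ℝ) : Measurable (evalU p) := by
  rw [evalU_eq]
  exact Finset.measurable_sum _ fun d _ => (measurable_mono _).const_mul _

/-- The expectation functional. -/
def II (p : MvPolynomial ι ℝ) : ℝ := ∫ x, evalU p x

lemma II_add (p q : MvPolynomial ι ℝ) : II (p + q) = II p + II q := by
  unfold II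
  rw [← integral_add (integrable_evalU p) (integrable_evalU q)]
  refine integral_congr_ae (Filter.Eventually.of_forall fun x => ?_)
  simp [evalU]

lemma II_smul (c : ℝ) (p : MvPolynomial ι ℝ) : II (MvPolynomial.C c * p) = c * II p := by
  unfold II
  rw [← integral_const_mul]
  refine integral_congr_ae (Filter.Eventually.of_forall fun x => ?_)
  simp [evalU]

lemma II_sum {κ : Type*} (s : Finset κ) (f : κ → MvPolynomial ι ℝ) :
    II (∑ t ∈ s, f t) = ∑ t ∈ s, II (f t) := by
  unfold II
  rw [← integral_finset_sum _ fun t _ => integrable_evalU (f t)]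
  refine integral_congr_ae (Filter.Eventually.of_forall fun x => ?_)
  simp [evalU]

-- new material
lemma mono_add_single (j : ι) (c : ℕ) (e : ι → ℕ) (x : ι → UU) :
    mono (fun j' => (if j' = j then c else 0) + e j') x = toR (x j) ^ c * mono e x := by
  unfold mono
  simp only [pow_add]
  rw [Finset.prod_mul_distrib]
  congr 1
  simp only [pow_ite, pow_zero]
  rw [Finset.prod_ite_eq' Finset.univ j (fun j' => toR (x j') ^ c)]
  simp

lemma II_eq_sum (p : MvPolynomial ι ℝ) :
    II p = ∑ d ∈ p.support, coeff d p * ∏ j, MM (d j) := by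
  unfold II
  rw [evalU_eq]
  rw [integral_finset_sum _ fun d _ => (integrable_mono _).const_mul _]
  exact Finset.sum_congr rfl fun d _ => by rw [integral_const_mul, integralMono]

lemma notMemVars_apply {p : MvPolynomial ι ℝ} {j : ι} (h : j ∉ p.vars)
    {d : ι →₀ ℕ} (hd : d ∈ p.support) : d j = 0 := by
  by_contra hne
  exact h ((mem_vars j).2 ⟨d, hd, Finsupp.mem_support_iff.2 hne⟩)

lemma II_X_pow_mul (j : ι) (c : ℕ) (q : MvPolynomial ι ℝ) (hq : j ∉ q.vars) :
    II (X j ^ c * q) = MM c * II q := by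
  have hev : evalU (X j ^ c * q) = fun x =>
      ∑ d ∈ q.support, coeff d q * mono (fun j' => (if j' = j then c else 0) + d j') x := by
    funext x
    have : evalU (X j ^ c * q) x = toR (x j) ^ c * evalU q x := by
      simp [evalU]
    rw [this, evalU_eq q]
    rw [Finset.mul_sum]
    refine Finset.sum_congr rfl fun d _ => ?_
    rw [mono_add_single]
    ring
  unfold II
  rw [hev, evalU_eq q]
  rw [integral_finset_sum _ fun d _ => (integrable_mono _).const_mul _,
      integral_finset_sum _ fun d _ => (integrable_mono _).const_mul _]
  rw [Finset.mul_sum]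
  refine Finset.sum_congr rfl fun d hd => ?_
  rw [integral_const_mul, integralMono, integral_const_mul, integralMono]
  have hdj : d j = 0 := notMemVars_apply hq hd
  rw [← Finset.mul_prod_erase Finset.univ _ (Finset.mem_univ j),
      ← Finset.mul_prod_erase Finset.univ (fun j' => MM (d j')) (Finset.mem_univ j)]
  simp only [if_pos rfl, hdj, add_zero, MM_zero, one_mul]
  have : ∀ j' ∈ Finset.univ.erase j,
      MM ((if j' = j then c else 0) + d j') = MM (d j') := by
    intro j' hj'
    rw [if_neg (Finset.mem_erase.1 hj').1, zero_add]
  rw [Finset.prod_congr rfl this]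
  norm_num
  ring

def chi (S : Finset ι) : MvPolynomial ι ℝ := ∏ j ∈ S, X j

lemma evalU_chi (S : Finset ι) (x : ι → UU) : evalU (chi S) x = ∏ j ∈ S, toR (x j) := by
  simp [evalU, chi]

lemma evalU_chi_mul_chi (S T : Finset ι) (x : ι → UU) :
    evalU (chi S * chi T) x =
      mono (fun j => (if j ∈ S then 1 else 0) + (if j ∈ T then 1 else 0)) x := by
  have h : ∀ W : Finset ι, ∏ j ∈ W, toR (x j)
      = ∏ j, toR (x j) ^ (if j ∈ W then 1 else 0) := by
    intro W
    simp only [pow_ite, pow_one, pow_zero]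
    rw [Finset.prod_ite_mem Finset.univ W (fun j => toR (x j)), Finset.univ_inter]
  have : evalU (chi S * chi T) x = evalU (chi S) x * evalU (chi T) x := by simp [evalU]
  rw [this, evalU_chi, evalU_chi, h S, h T, mono, ← Finset.prod_mul_distrib]
  exact Finset.prod_congr rfl fun j _ => (pow_add _ _ _).symm

lemma II_chi_mul_chi (S T : Finset ι) :
    II (chi S * chi T) = if S = T then (3⁻¹ : ℝ) ^ S.card else 0 := by
  unfold II
  rw [show (fun x => evalU (chi S * chi T) x) = mono (fun j => (if j ∈ S then 1 else 0) + (if j ∈ T then 1 else 0)) from funext (evalU_chi_mul_chi S T)]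
  rw [integralMono]
  by_cases hST : S = T
  · subst hST
    rw [if_pos rfl]
    have : ∀ j : ι, MM ((if j ∈ S then 1 else 0) + (if j ∈ S then 1 else 0))
        = if j ∈ S then (3⁻¹:ℝ) else 1 := by
      intro j; by_cases hj : j ∈ S <;> simp [hj, MM_two, MM_zero]
    rw [Finset.prod_congr rfl fun j _ => this j]
    rw [Finset.prod_ite_mem Finset.univ S (fun _ => (3⁻¹:ℝ)), Finset.univ_inter,
        Finset.prod_const]
  · rw [if_neg hST]
    obtain ⟨j, hj⟩ : ∃ j, ¬(j ∈ S ↔ j ∈ T) := by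
      by_contra h
      push_neg at h
      exact hST (Finset.ext fun j => (h j))
    refine Finset.prod_eq_zero (Finset.mem_univ j) ?_
    by_cases hS : j ∈ S <;> by_cases hT : j ∈ T
    · exact absurd (iff_of_true hS hT) hj
    · simp [hS, hT, MM_one]
    · simp [hS, hT, MM_one]
    · exact absurd (iff_of_false hS hT) hj

variable {α : Type*} [MeasurableSpace α] {μ : Measure α}

lemma cauchy_schwarz_integral (F G : α → ℝ) (hFm : AEStronglyMeasurable F μ)
    (hGm : AEStronglyMeasurable G μ)
    (hF2 : Integrable (fun x => F x ^ 2) μ) (hG2 : Integrable (fun x => G x ^ 2) μ)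
    (hFn : ∀ x, 0 ≤ F x) (hGn : ∀ x, 0 ≤ G x) :
    ∫ x, F x * G x ∂μ ≤ Real.sqrt (∫ x, F x ^ 2 ∂μ) * Real.sqrt (∫ x, G x ^ 2 ∂μ) := by
  have h2 : (2 : ℝ).HolderConjugate 2 := by
    constructor <;> norm_num
  have hF : MemLp F (ENNReal.ofReal 2) μ := by
    rw [show ENNReal.ofReal 2 = 2 by norm_num]
    exact (memLp_two_iff_integrable_sq hFm).2 hF2
  have hG : MemLp G (ENNReal.ofReal 2) μ := by
    rw [show ENNReal.ofReal 2 = 2 by norm_num]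
    exact (memLp_two_iff_integrable_sq hGm).2 hG2
  have := integral_mul_le_Lp_mul_Lq_of_nonneg h2
    (Filter.Eventually.of_forall hFn) (Filter.Eventually.of_forall hGn) hF hG
  calc ∫ x, F x * G x ∂μ ≤ (∫ x, F x ^ (2:ℝ) ∂μ) ^ ((1:ℝ)/2) * (∫ x, G x ^ (2:ℝ) ∂μ) ^ ((1:ℝ)/2) := this
    _ = Real.sqrt (∫ x, F x ^ 2 ∂μ) * Real.sqrt (∫ x, G x ^ 2 ∂μ) := by
        rw [← Real.sqrt_eq_rpow, ← Real.sqrt_eq_rpow]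
        congr 2 <;> refine integral_congr_ae (Filter.Eventually.of_forall fun x => ?_) <;>
          · norm_num [Real.rpow_natCast (F x) 2, Real.rpow_natCast (G x) 2]

-- new material
lemma evalU_mul (p q : MvPolynomial ι ℝ) (x : ι → UU) :
    evalU (p * q) x = evalU p x * evalU q x := by simp [evalU]
lemma evalU_pow (p : MvPolynomial ι ℝ) (n : ℕ) (x : ι → UU) :
    evalU (p ^ n) x = (evalU p x) ^ n := by simp [evalU]

lemma II_sq_nonneg (p : MvPolynomial ι ℝ) : 0 ≤ II (p ^ 2) := by
  unfold II
  refine integral_nonneg fun x => ?_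
  rw [evalU_pow]
  positivity

lemma II_pow4_nonneg (p : MvPolynomial ι ℝ) : 0 ≤ II (p ^ 4) := by
  unfold II
  refine integral_nonneg fun x => ?_
  rw [evalU_pow]
  positivity

lemma II_C (c : ℝ) : II (C c : MvPolynomial ι ℝ) = c := by
  unfold II
  simp [evalU]

lemma II_zero : II (0 : MvPolynomial ι ℝ) = 0 := by
  unfold II; simp [evalU]

lemma II_mul_sq_le (g h : MvPolynomial ι ℝ) :
    II (g ^ 2 * h ^ 2) ≤ Real.sqrt (II (g ^ 4)) * Real.sqrt (II (h ^ 4)) := by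
  have e4 : ∀ q : MvPolynomial ι ℝ, (fun x => (evalU q x ^ 2) ^ 2) = evalU (q ^ 4) := by
    intro q; funext x; rw [evalU_pow]; ring
  have h1 : II (g ^ 2 * h ^ 2) = ∫ x, (evalU g x ^ 2) * (evalU h x ^ 2) := by
    unfold II
    refine integral_congr_ae (Filter.Eventually.of_forall fun x => ?_)
    rw [evalU_mul, evalU_pow, evalU_pow]
  have h2 : II (g ^ 4) = ∫ x, (evalU g x ^ 2) ^ 2 := by
    unfold II; rw [e4]
  have h3 : II (h ^ 4) = ∫ x, (evalU h x ^ 2) ^ 2 := by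
    unfold II; rw [e4]
  rw [h1, h2, h3]
  refine cauchy_schwarz_integral _ _ ?_ ?_ ?_ ?_ (fun x => sq_nonneg _) (fun x => sq_nonneg _)
  · exact ((measurable_evalU g).pow_const 2).aestronglyMeasurable
  · exact ((measurable_evalU h).pow_const 2).aestronglyMeasurable
  · rw [e4]; exact integrable_evalU _
  · rw [e4]; exact integrable_evalU _

lemma vars_sum_chi (j : ι) (A : Finset (Finset ι)) (a : Finset ι → ℝ)
    (hA : ∀ S ∈ A, j ∉ S) : j ∉ (∑ S ∈ A, C (a S) * chi S).vars := by
  intro hj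
  have h1 := vars_sum_subset (t := A) (φ := fun S => C (a S) * chi S) hj
  rw [Finset.mem_biUnion] at h1
  obtain ⟨S, hS, hjS⟩ := h1
  have h2 := vars_mul (C (a S)) (chi S) hjS
  rw [Finset.mem_union] at h2
  rcases h2 with h | h
  · rw [vars_C] at h; exact absurd h (Finset.notMem_empty j)
  · have h3 := vars_prod (s := S) (f := fun j => (X j : MvPolynomial ι ℝ)) h
    rw [Finset.mem_biUnion] at h3
    obtain ⟨j', hj', hjj'⟩ := h3
    rw [vars_X, Finset.mem_singleton] at hjj'
    exact hA S hS (hjj' ▸ hj')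

/-- The key hypercontractive fourth-moment bound, by induction on the coordinate set. -/
lemma fourth_moment_bound (J : Finset ι) :
    ∀ (d : ℕ) (A : Finset (Finset ι)) (a : Finset ι → ℝ),
    (∀ S ∈ A, S ⊆ J ∧ S.card ≤ d) →
    II ((∑ S ∈ A, C (a S) * chi S) ^ 4) ≤ 9 ^ d * (II ((∑ S ∈ A, C (a S) * chi S) ^ 2)) ^ 2 := by
  induction J using Finset.induction_on with
  | empty =>
    intro d A a hA
    have hA' : A ⊆ {∅} := fun S hS => Finset.mem_singleton.2
      (Finset.subset_empty.1 (hA S hS).1)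
    rcases Finset.subset_singleton_iff.1 hA' with rfl | rfl
    · simp [II_zero]
    · have hchi : chi (∅ : Finset ι) = 1 := by simp [chi]
      rw [Finset.sum_singleton, hchi, mul_one]
      rw [← C_pow, ← C_pow, II_C, II_C]
      have h9 : (1:ℝ) ≤ 9 ^ d := one_le_pow₀ (by norm_num)
      nlinarith [sq_nonneg (a ∅ ^ 2)]
  | @insert j J hjJ IH =>
    intro d A a hA
    rcases Nat.eq_zero_or_pos d with rfl | hd
    · -- all sets are empty, so j occurs nowhere
      refine IH 0 A a fun S hS => ?_
      have h0 : S = ∅ := Finset.card_eq_zero.1 (Nat.le_zero.1 (hA S hS).2)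
      exact ⟨by simp [h0], (hA S hS).2⟩
    obtain ⟨e, rfl⟩ : ∃ e, d = e + 1 := ⟨d - 1, (Nat.succ_pred_eq_of_pos hd).symm⟩
    classical
    set A0 := A.filter (fun S => j ∉ S) with hA0
    set A1 := A.filter (fun S => j ∈ S) with hA1
    set g := ∑ S ∈ A0, C (a S) * chi S with hg
    set h := ∑ T ∈ A1.image (fun S => S.erase j), C (a (insert j T)) * chi T with hh
    have hinj : ∀ x ∈ A1, ∀ y ∈ A1, x.erase j = y.erase j → x = y := by
      intro x hx y hy hxy
      have hjx : j ∈ x := (Finset.mem_filter.1 hx).2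
      have hjy : j ∈ y := (Finset.mem_filter.1 hy).2
      rw [← Finset.insert_erase hjx, ← Finset.insert_erase hjy, hxy]
    have hsum1 : ∑ S ∈ A1, C (a S) * chi S = X j * h := by
      rw [hh, Finset.sum_image hinj, Finset.mul_sum]
      refine Finset.sum_congr rfl fun S hS => ?_
      have hjS : j ∈ S := (Finset.mem_filter.1 hS).2
      rw [Finset.insert_erase hjS]
      have : chi S = X j * chi (S.erase j) := (Finset.mul_prod_erase S X hjS).symm
      rw [this]; ring
    have hp : ∑ S ∈ A, C (a S) * chi S = g + X j * h := by
      rw [← hsum1, hg]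
      rw [← Finset.sum_filter_add_sum_filter_not A (fun S => j ∈ S)]
      rw [add_comm]
    have hgv : j ∉ g.vars := by
      refine vars_sum_chi j A0 a fun S hS => (Finset.mem_filter.1 hS).2
    have hhv : j ∉ h.vars := by
      refine vars_sum_chi j _ _ fun T hT => ?_
      obtain ⟨S, _, rfl⟩ := Finset.mem_image.1 hT
      exact Finset.notMem_erase j S
    -- second moment
    have hI2 : II ((∑ S ∈ A, C (a S) * chi S) ^ 2) = II (g ^ 2) + 3⁻¹ * II (h ^ 2) := by
      have hid : (∑ S ∈ A, C (a S) * chi S) ^ 2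
          = g ^ 2 + (X j ^ 1 * (C 2 * (g * h)) + X j ^ 2 * h ^ 2) := by
        rw [hp]; simp only [map_ofNat]; ring
      rw [hid, II_add, II_add, II_X_pow_mul, II_X_pow_mul, MM_one, MM_two]
      · ring
      · exact fun hc => hhv (vars_pow h 2 hc)
      · intro hc
        rcases Finset.mem_union.1 (vars_mul _ _ hc) with hc' | hc'
        · rw [vars_C] at hc'; exact absurd hc' (Finset.notMem_empty j)
        · rcases Finset.mem_union.1 (vars_mul _ _ hc') with hc'' | hc''
          · exact hgv hc''
          · exact hhv hc''
    -- fourth moment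
    have hI4 : II ((∑ S ∈ A, C (a S) * chi S) ^ 4)
        = II (g ^ 4) + 2 * II (g ^ 2 * h ^ 2) + 5⁻¹ * II (h ^ 4) := by
      have hid : (∑ S ∈ A, C (a S) * chi S) ^ 4
          = g ^ 4 + (X j ^ 1 * (C 4 * (g ^ 3 * h))
            + (X j ^ 2 * (C 6 * (g ^ 2 * h ^ 2))
            + (X j ^ 3 * (C 4 * (g * h ^ 3)) + X j ^ 4 * h ^ 4))) := by
        rw [hp]; simp only [map_ofNat]; ring
      have nv : ∀ q : MvPolynomial ι ℝ, j ∉ q.vars → ∀ c : ℝ, j ∉ (C c * q).vars := by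
        intro q hq c hc
        rcases Finset.mem_union.1 (vars_mul _ _ hc) with hc' | hc'
        · rw [vars_C] at hc'; exact absurd hc' (Finset.notMem_empty j)
        · exact hq hc'
      have nvmul : ∀ q q' : MvPolynomial ι ℝ, j ∉ q.vars → j ∉ q'.vars → j ∉ (q * q').vars := by
        intro q q' hq hq' hc
        rcases Finset.mem_union.1 (vars_mul _ _ hc) with hc' | hc'
        exacts [hq hc', hq' hc']
      have nvpow : ∀ (q : MvPolynomial ι ℝ) (n : ℕ), j ∉ q.vars → j ∉ (q ^ n).vars :=
        fun q n hq hc => hq (vars_pow q n hc)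
      rw [hid, II_add, II_add, II_add, II_add,
          II_X_pow_mul j 1 _ (nv _ (nvmul _ _ (nvpow _ 3 hgv) hhv) 4),
          II_X_pow_mul j 2 _ (nv _ (nvmul _ _ (nvpow _ 2 hgv) (nvpow _ 2 hhv)) 6),
          II_X_pow_mul j 3 _ (nv _ (nvmul _ _ hgv (nvpow _ 3 hhv)) 4),
          II_X_pow_mul j 4 _ (nvpow _ 4 hhv),
          MM_one, MM_two, MM_three, MM_four]
      simp only [II_smul]
      ring
    -- apply IH
    have hx4 : II (g ^ 4) ≤ 9 ^ (e + 1) * (II (g ^ 2)) ^ 2 := by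
      have h1 := IH (e + 1) A0 a ?_
      · rw [← hg] at h1; exact h1
      refine fun S hS => ?_
      have hSA : S ∈ A := (Finset.mem_filter.1 hS).1
      have hjS : j ∉ S := (Finset.mem_filter.1 hS).2
      refine ⟨fun x hx => ?_, (hA S hSA).2⟩
      rcases Finset.mem_insert.1 ((hA S hSA).1 hx) with rfl | hx'
      · exact absurd hx hjS
      · exact hx'
    have hy4 : II (h ^ 4) ≤ 9 ^ e * (II (h ^ 2)) ^ 2 := by
      have h1 := IH e (A1.image (fun S => S.erase j)) (fun T => a (insert j T)) ?_
      · rw [← hh] at h1; exact h1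
      refine fun T hT => ?_
      obtain ⟨S, hS, rfl⟩ := Finset.mem_image.1 hT
      have hSA : S ∈ A := (Finset.mem_filter.1 hS).1
      have hjS : j ∈ S := (Finset.mem_filter.1 hS).2
      constructor
      · intro x hx
        have hxS : x ∈ S := Finset.mem_of_mem_erase hx
        have hxj : x ≠ j := Finset.ne_of_mem_erase hx
        rcases Finset.mem_insert.1 ((hA S hSA).1 hxS) with rfl | hx'
        · exact absurd rfl hxj
        · exact hx'
      · rw [Finset.card_erase_of_mem hjS]
        have := (hA S hSA).2
        omega
    -- assemble
    have hx2 : (0:ℝ) ≤ II (g ^ 2) := II_sq_nonneg g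
    have hy2 : (0:ℝ) ≤ II (h ^ 2) := II_sq_nonneg h
    have hx40 : (0:ℝ) ≤ II (g ^ 4) := II_pow4_nonneg g
    have hy40 : (0:ℝ) ≤ II (h ^ 4) := II_pow4_nonneg h
    have hcs := II_mul_sq_le g h
    set s := Real.sqrt (II (g ^ 4)) with hs
    set t := Real.sqrt (II (h ^ 4)) with ht
    have hs2 : s ^ 2 = II (g ^ 4) := Real.sq_sqrt hx40
    have ht2 : t ^ 2 = II (h ^ 4) := Real.sq_sqrt hy40
    have hsn : 0 ≤ s := Real.sqrt_nonneg _
    have htn : 0 ≤ t := Real.sqrt_nonneg _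
    have hsle : s ≤ 3 ^ (e + 1) * II (g ^ 2) := by
      rw [hs]
      have : (9:ℝ) ^ (e+1) * (II (g^2))^2 = (3 ^ (e+1) * II (g^2))^2 := by
        rw [mul_pow, ← pow_mul]
        norm_num
        rw [show (3:ℝ)^((e+1)*2) = 3^(2*(e+1)) by ring_nf, pow_mul]
        norm_num
      calc Real.sqrt (II (g^4)) ≤ Real.sqrt ((3 ^ (e+1) * II (g^2))^2) := by
            rw [← this]; exact Real.sqrt_le_sqrt hx4
        _ = 3 ^ (e+1) * II (g^2) := Real.sqrt_sq (by positivity)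
    have htle : t ≤ 3 ^ e * II (h ^ 2) := by
      rw [ht]
      have : (9:ℝ) ^ e * (II (h^2))^2 = (3 ^ e * II (h^2))^2 := by
        rw [mul_pow, ← pow_mul]
        rw [show (3:ℝ)^(e*2) = 3^(2*e) by ring_nf, pow_mul]
        norm_num
      calc Real.sqrt (II (h^4)) ≤ Real.sqrt ((3 ^ e * II (h^2))^2) := by
            rw [← this]; exact Real.sqrt_le_sqrt hy4
        _ = 3 ^ e * II (h^2) := Real.sqrt_sq (by positivity)
    rw [hI2, hI4]
    have key : II (g^4) + 2 * II (g^2 * h^2) + 5⁻¹ * II (h^4) ≤ (s + t)^2 := by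
      nlinarith [hcs, hs2, ht2, hy40]
    have key2 : (s + t)^2 ≤ (3 ^ (e+1) * II (g^2) + 3 ^ e * II (h^2))^2 := by
      have h1 : s + t ≤ 3 ^ (e+1) * II (g^2) + 3 ^ e * II (h^2) := add_le_add hsle htle
      nlinarith [add_nonneg hsn htn]
    have key3 : (3 ^ (e+1) * II (g^2) + 3 ^ e * II (h^2))^2
        = 9 ^ (e+1) * (II (g^2) + 3⁻¹ * II (h^2))^2 := by
      have h3 : (3:ℝ) ^ (e+1) = 3 ^ e * 3 := pow_succ 3 e
      have h9 : (9:ℝ) ^ (e+1) = ((3:ℝ) ^ (e+1))^2 := by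
        rw [← pow_mul, show (e+1)*2 = 2*(e+1) by ring, pow_mul]
        norm_num
      rw [h9, h3]
      ring
    linarith

-- new : second moment formula
lemma II_sq_eq (A : Finset (Finset ι)) (a : Finset ι → ℝ) :
    II ((∑ S ∈ A, C (a S) * chi S) ^ 2) = ∑ S ∈ A, (a S) ^ 2 * (3⁻¹ : ℝ) ^ S.card := by
  have hid : (∑ S ∈ A, C (a S) * chi S) ^ 2
      = ∑ S ∈ A, ∑ T ∈ A, C (a S * a T) * (chi S * chi T) := by
    rw [sq, Finset.sum_mul_sum]
    refine Finset.sum_congr rfl fun S _ => Finset.sum_congr rfl fun T _ => ?_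
    rw [C_mul]; ring
  rw [hid, II_sum]
  rw [Finset.sum_congr rfl fun S _ => II_sum A _]
  have : ∀ S ∈ A, ∑ T ∈ A, II (C (a S * a T) * (chi S * chi T))
      = (a S) ^ 2 * (3⁻¹ : ℝ) ^ S.card := by
    intro S hS
    have : ∀ T ∈ A, II (C (a S * a T) * (chi S * chi T))
        = if S = T then (a S * a T) * (3⁻¹ : ℝ) ^ S.card else 0 := by
      intro T _
      rw [II_smul, II_chi_mul_chi]
      by_cases hST : S = T <;> simp [hST]
    rw [Finset.sum_congr rfl this]
    have h2 : ∀ T ∈ A, (if S = T then (a S * a T) * (3⁻¹ : ℝ) ^ S.card else 0)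
        = if S = T then (a S * a S) * (3⁻¹ : ℝ) ^ S.card else 0 := by
      intro T _
      by_cases hST : S = T
      · subst hST; rfl
      · simp [hST]
    rw [Finset.sum_congr rfl h2, Finset.sum_ite_eq A S fun _ => (a S * a S) * (3⁻¹:ℝ) ^ S.card,
        if_pos hS, sq]
  exact Finset.sum_congr rfl this

-- analytic consequence: first absolute moment lower bound
lemma first_moment_lower (p : MvPolynomial ι ℝ) (k1 : ℕ)
    (h4 : II (p ^ 4) ≤ 9 ^ k1 * (II (p ^ 2)) ^ 2)
    (hpos : 0 < II (p ^ 2)) :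
    Real.sqrt (II (p ^ 2)) / 3 ^ k1 ≤ ∫ x, |evalU p x| := by
  set f := evalU p with hf
  have hfm : Measurable f := measurable_evalU p
  have hfi : Integrable f := integrable_evalU p
  have hσ : II (p ^ 2) = ∫ x, f x ^ 2 := by
    unfold II
    exact integral_congr_ae (Filter.Eventually.of_forall fun x => evalU_pow p 2 x)
  have hQ : II (p ^ 4) = ∫ x, f x ^ 4 := by
    unfold II
    exact integral_congr_ae (Filter.Eventually.of_forall fun x => evalU_pow p 4 x)
  have hif2 : Integrable (fun x => f x ^ 2) := by
    rw [show (fun x => f x ^ 2) = evalU (p ^ 2) from funext fun x => (evalU_pow p 2 x).symm]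
    exact integrable_evalU _
  have hif4 : Integrable (fun x => f x ^ 4) := by
    rw [show (fun x => f x ^ 4) = evalU (p ^ 4) from funext fun x => (evalU_pow p 4 x).symm]
    exact integrable_evalU _
  have hif1 : Integrable (fun x => |f x|) := hfi.abs
  have hcube : ∀ z : ℝ, 0 ≤ z → z ^ 3 ≤ 1 + z ^ 4 := by
    intro z hz
    rcases le_or_gt z 1 with h | h
    · nlinarith [pow_le_one₀ hz h (n := 3), pow_nonneg hz 4]
    · nlinarith [pow_le_pow_right₀ h.le (by norm_num : (3:ℕ) ≤ 4), pow_nonneg hz 3]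
  have hif3 : Integrable (fun x => |f x| ^ 3) := by
    refine Integrable.mono' ((integrable_const 1).add hif4) ?_ ?_
    · exact ((hfm.abs.pow_const 3)).aestronglyMeasurable
    · refine Filter.Eventually.of_forall fun x => ?_
      rw [Real.norm_eq_abs, abs_of_nonneg (by positivity)]
      have := hcube |f x| (abs_nonneg _)
      calc |f x| ^ 3 ≤ 1 + |f x| ^ 4 := this
        _ = 1 + f x ^ 4 := by rw [← abs_pow, abs_of_nonneg (by positivity)]
  -- CS1 : ∫ f² ≤ √(∫|f|) √(∫|f|³)
  have cs1 : ∫ x, f x ^ 2 ≤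
      Real.sqrt (∫ x, |f x|) * Real.sqrt (∫ x, |f x| ^ 3) := by
    have := cauchy_schwarz_integral (μ := (volume : Measure (ι → UU))) (fun x => Real.sqrt |f x|)
      (fun x => |f x| * Real.sqrt |f x|)
      (hfm.abs.sqrt).aestronglyMeasurable
      (hfm.abs.mul hfm.abs.sqrt).aestronglyMeasurable
      ?_ ?_ (fun x => Real.sqrt_nonneg _) (fun x => by positivity)
    · calc ∫ x, f x ^ 2 = ∫ x, Real.sqrt |f x| * (|f x| * Real.sqrt |f x|) := by
            refine integral_congr_ae (Filter.Eventually.of_forall fun x => ?_)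
            beta_reduce
            rw [show Real.sqrt |f x| * (|f x| * Real.sqrt |f x|)
              = (Real.sqrt |f x| * Real.sqrt |f x|) * |f x| by ring,
              Real.mul_self_sqrt (abs_nonneg _), ← abs_mul, ← sq, abs_of_nonneg (sq_nonneg _)]
        _ ≤ Real.sqrt (∫ x, Real.sqrt |f x| ^ 2) * Real.sqrt (∫ x, (|f x| * Real.sqrt |f x|) ^ 2) := this
        _ = Real.sqrt (∫ x, |f x|) * Real.sqrt (∫ x, |f x| ^ 3) := by
            congr 2
            · exact integral_congr_ae (Filter.Eventually.of_forall fun x =>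
                Real.sq_sqrt (abs_nonneg _))
            · refine integral_congr_ae (Filter.Eventually.of_forall fun x => ?_)
              beta_reduce
              rw [mul_pow, Real.sq_sqrt (abs_nonneg _)]
              ring
    · rw [show (fun x => Real.sqrt |f x| ^ 2) = fun x => |f x| from
        funext fun x => Real.sq_sqrt (abs_nonneg _)]
      exact hif1
    · rw [show (fun x => (|f x| * Real.sqrt |f x|) ^ 2) = fun x => |f x| ^ 3 from
        funext fun x => by rw [mul_pow, Real.sq_sqrt (abs_nonneg _)]; ring]
      exact hif3
  -- CS2 : ∫ |f|³ ≤ √(∫ f²) √(∫ f⁴)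
  have cs2 : ∫ x, |f x| ^ 3 ≤
      Real.sqrt (∫ x, f x ^ 2) * Real.sqrt (∫ x, f x ^ 4) := by
    have := cauchy_schwarz_integral (μ := (volume : Measure (ι → UU))) (fun x => |f x|) (fun x => f x ^ 2)
      hfm.abs.aestronglyMeasurable (hfm.pow_const 2).aestronglyMeasurable
      (by rw [show (fun x => |f x| ^ 2) = fun x => f x ^ 2 from funext fun x => sq_abs _]
          exact hif2)
      (by rw [show (fun x => (f x ^ 2) ^ 2) = fun x => f x ^ 4 from funext fun x => by ring]
          exact hif4)
      (fun x => abs_nonneg _) (fun x => sq_nonneg _)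
    calc ∫ x, |f x| ^ 3 = ∫ x, |f x| * f x ^ 2 := by
          refine integral_congr_ae (Filter.Eventually.of_forall fun x => ?_)
          beta_reduce
          rw [← sq_abs]; ring
      _ ≤ Real.sqrt (∫ x, |f x| ^ 2) * Real.sqrt (∫ x, (f x ^ 2) ^ 2) := this
      _ = Real.sqrt (∫ x, f x ^ 2) * Real.sqrt (∫ x, f x ^ 4) := by
          congr 2
          · exact integral_congr_ae (Filter.Eventually.of_forall fun x => sq_abs _)
          · exact integral_congr_ae (Filter.Eventually.of_forall fun x => by ring)
  -- assemble
  set α := Real.sqrt (∫ x, |f x|) with hα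
  set γ := Real.sqrt (∫ x, f x ^ 2) with hγ
  set δ := Real.sqrt (∫ x, f x ^ 4) with hδ
  have hγpos : 0 < γ := Real.sqrt_pos.2 (hσ ▸ hpos)
  have hαn : 0 ≤ α := Real.sqrt_nonneg _
  have hδn : 0 ≤ δ := Real.sqrt_nonneg _
  have hα2 : α ^ 2 = ∫ x, |f x| :=
    Real.sq_sqrt (integral_nonneg fun x => abs_nonneg _)
  have hγ2 : γ ^ 2 = ∫ x, f x ^ 2 :=
    Real.sq_sqrt (integral_nonneg fun x => sq_nonneg _)
  have hδ2 : δ ^ 2 = ∫ x, f x ^ 4 :=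
    Real.sq_sqrt (integral_nonneg fun x => by positivity)
  have hβn : (0:ℝ) ≤ ∫ x, |f x| ^ 3 := integral_nonneg fun x => by positivity
  set β := Real.sqrt (∫ x, |f x| ^ 3) with hβ
  have hβ2 : β ^ 2 = ∫ x, |f x| ^ 3 := Real.sq_sqrt hβn
  -- γ² ≤ α β ; β² ≤ γ δ  ⇒ γ³ ≤ α² δ
  have h1 : γ ^ 2 ≤ α * β := by rw [hγ2]; exact cs1
  have h2 : β ^ 2 ≤ γ * δ := by rw [hβ2]; exact cs2
  have h3 : γ ^ 3 ≤ α ^ 2 * δ := by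
    have hββ : (0:ℝ) ≤ β := Real.sqrt_nonneg _
    nlinarith [sq_nonneg (α*β - γ^2), sq_nonneg α, sq_nonneg β, mul_nonneg hαn hββ,
      hγpos.le, mul_nonneg (mul_nonneg hαn hαn) hδn]
  -- δ ≤ 3^k1 γ²
  have h4' : δ ≤ 3 ^ k1 * γ ^ 2 := by
    have h9 : (∫ x, f x ^ 4) ≤ (3 ^ k1 * γ ^ 2) ^ 2 := by
      rw [hγ2]
      calc (∫ x, f x ^ 4) = II (p ^ 4) := hQ.symm
        _ ≤ 9 ^ k1 * (II (p ^ 2)) ^ 2 := h4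
        _ = (3 ^ k1 * (∫ x, f x ^ 2)) ^ 2 := by
            rw [hσ, mul_pow, ← pow_mul, show k1 * 2 = 2 * k1 by ring, pow_mul]
            norm_num
    calc δ ≤ Real.sqrt ((3 ^ k1 * γ ^ 2) ^ 2) := Real.sqrt_le_sqrt h9
      _ = 3 ^ k1 * γ ^ 2 := Real.sqrt_sq (by positivity)
  -- conclude : γ / 3^k1 ≤ α²
  have hconc : γ / 3 ^ k1 ≤ α ^ 2 := by
    have h5 : γ ^ 3 ≤ α ^ 2 * (3 ^ k1 * γ ^ 2) := by
      calc γ ^ 3 ≤ α ^ 2 * δ := h3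
        _ ≤ α ^ 2 * (3 ^ k1 * γ ^ 2) := by
            exact mul_le_mul_of_nonneg_left h4' (by positivity)
    rw [div_le_iff₀ (by positivity : (0:ℝ) < (3:ℝ) ^ k1)]
    have hγ2pos : (0:ℝ) < γ ^ 2 := by positivity
    calc γ = γ ^ 3 / γ ^ 2 := by field_simp
      _ ≤ α ^ 2 * (3 ^ k1 * γ ^ 2) / γ ^ 2 :=
          div_le_div_of_nonneg_right h5 hγ2pos.le
      _ = α ^ 2 * 3 ^ k1 := by field_simp
  calc Real.sqrt (II (p ^ 2)) / 3 ^ k1 = γ / 3 ^ k1 := by rw [hγ, hσ]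
    _ ≤ α ^ 2 := hconc
    _ = ∫ x, |f x| := hα2

lemma evalU_sum_chi (A : Finset (Finset ι)) (a : Finset ι → ℝ) (x : ι → UU) :
    evalU (∑ S ∈ A, C (a S) * chi S) x = ∑ S ∈ A, a S * ∏ j ∈ S, toR (x j) := by
  simp [evalU, chi]


end

end LocalUpdateAux

open LocalUpdateAux MvPolynomial in

/-- **First-moment lower bound for the local-update random variable.**
Fix a vertex `i` of a finite set `V` and a finite family `B` of pairwise distinct subsets of
`V`, each containing `i` and at least one other vertex, with `|R| ≤ k`, and `u : B → ℝ` with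
`Σ_{R∈B} u_R² > 0`.  If `(r j)_{j ≠ i}` are i.i.d. uniform on `[−1,1]` and
`ξ = Σ_{R∈B} u_R ∏_{j∈R, j≠i} r_j`, then for every `t ∈ [0,1]`,
`E[|ξ|] ≥ (t (1−t²)² / 9^{k−1}) · 3^{−(k−1)/2} · √(Σ_{R∈B} u_R²)`. -/
theorem local_update_first_moment
    {Ω : Type*} [MeasurableSpace Ω] (μ : Measure Ω) [IsProbabilityMeasure μ]
    {V : Type*} [Fintype V] [DecidableEq V] (i : V) (k : ℕ)
    (B : Finset (Finset V))
    (hB : ∀ R ∈ B, i ∈ R ∧ (∃ j ∈ R, j ≠ i) ∧ R.card ≤ k)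
    (r : V → Ω → ℝ)
    (hmeas : ∀ j ≠ i, Measurable (r j))
    (hunif : ∀ j ≠ i,
      Measure.map (r j) μ = (2⁻¹ : ENNReal) • volume.restrict (Set.Icc (-1 : ℝ) 1))
    (hindep : iIndepFun (fun j : { j : V // j ≠ i } => r j) μ)
    (u : Finset V → ℝ) (hu : 0 < ∑ R ∈ B, (u R) ^ 2)
    (ξ : Ω → ℝ) (hξ : ∀ ω, ξ ω = ∑ R ∈ B, u R * ∏ j ∈ R.erase i, r j ω) :
    ∀ t ∈ Set.Icc (0 : ℝ) 1,
      t * (1 - t ^ 2) ^ 2 / 9 ^ (k - 1) * Real.sqrt ((3 : ℝ)⁻¹ ^ (k - 1)) *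
          Real.sqrt (∑ R ∈ B, (u R) ^ 2)
        ≤ ∫ ω, |ξ ω| ∂μ := by
  classical
  intro t ht
  set ι := { j : V // j ≠ i } with hι
  -- the coding of the family B in terms of subsets of ι
  set φ : Finset V → Finset ι := fun R => (R.erase i).subtype (fun j => j ≠ i) with hφ
  set A : Finset (Finset ι) := B.image φ with hA
  set a : Finset ι → ℝ := fun S => u (insert i (S.map (Function.Embedding.subtype _))) with ha
  have hφmap : ∀ R ∈ B, (φ R).map (Function.Embedding.subtype _) = R.erase i := by
    intro R hR
    rw [hφ]
    rw [Finset.subtype_map]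
    exact Finset.filter_true_of_mem fun x hx => Finset.ne_of_mem_erase hx
  have hφback : ∀ R ∈ B, insert i ((φ R).map (Function.Embedding.subtype _)) = R := by
    intro R hR
    rw [hφmap R hR]
    exact Finset.insert_erase (hB R hR).1
  have haφ : ∀ R ∈ B, a (φ R) = u R := by
    intro R hR
    rw [ha]
    simp only
    rw [hφback R hR]
  have hφinj : ∀ x ∈ B, ∀ y ∈ B, φ x = φ y → x = y := by
    intro x hx y hy hxy
    have := congrArg (fun S => insert i (Finset.map (Function.Embedding.subtype _) S)) hxy
    simpa [hφback x hx, hφback y hy] using this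
  have hφcard : ∀ R ∈ B, (φ R).card = R.card - 1 := by
    intro R hR
    have h1 : ((φ R).map (Function.Embedding.subtype _)).card = (φ R).card :=
      Finset.card_map _
    rw [hφmap R hR] at h1
    rw [← h1, Finset.card_erase_of_mem (hB R hR).1]
  set p : MvPolynomial ι ℝ := ∑ S ∈ A, C (a S) * chi S with hp
  -- the random vector
  set T : Ω → (ι → UU) := fun ω j => (r j.1 ω : ℝ) with hT
  have hTmeas : Measurable T := by
    rw [hT]
    exact measurable_pi_lambda _ fun j => hmeas j.1 j.2
  -- identification of ξ with the polynomial
  have hxi : ∀ ω, ξ ω = evalU p (T ω) := by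
    intro ω
    rw [hξ, hp, evalU_sum_chi, hA, Finset.sum_image hφinj]
    refine Finset.sum_congr rfl fun R hR => ?_
    rw [haφ R hR]
    congr 1
    rw [← hφmap R hR, Finset.prod_map]
    rfl
  -- law of T
  have hlaw : Measure.map T μ = (volume : Measure (ι → UU)) := by
    rw [show (volume : Measure (ι → UU)) = Measure.pi (fun _ => (volume : Measure UU)) from
      volume_pi]
    refine (@Measure.pi_eq ι (fun _ => UU) _ _ (fun _ => (volume : Measure UU)) (fun _ => sfUU) (Measure.map T μ) fun s hs => ?_).symm
    rw [Measure.map_apply hTmeas (MeasurableSet.univ_pi hs)]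
    have hpre : T ⁻¹' (Set.univ.pi s) = ⋂ j ∈ (Finset.univ : Finset ι), (r j.1) ⁻¹' (s j) := by
      ext ω
      simp [hT, Set.mem_pi]
      exact ⟨fun h j => h j (Set.mem_univ _), fun h j _ => h j⟩
    rw [hpre]
    rw [hindep.measure_inter_preimage_eq_mul Finset.univ (fun j _ => hs j)]
    refine Finset.prod_congr rfl fun j _ => ?_
    rw [← Measure.map_apply (hmeas j.1 j.2) (hs j), hunif j.1 j.2]
    rfl
  -- transfer of the integral
  have htrans : ∫ ω, |ξ ω| ∂μ = ∫ x, |evalU p x| := by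
    calc ∫ ω, |ξ ω| ∂μ = ∫ ω, |evalU p (T ω)| ∂μ := by
          exact integral_congr_ae (Filter.Eventually.of_forall fun ω => by beta_reduce; rw [hxi ω])
      _ = ∫ x, |evalU p x| ∂(Measure.map T μ) := by
          rw [integral_map hTmeas.aemeasurable
            (measurable_evalU p).abs.aestronglyMeasurable]
      _ = ∫ x, |evalU p x| := by rw [hlaw]; rfl
  -- moments
  have hcond : ∀ S ∈ A, S ⊆ (Finset.univ : Finset ι) ∧ S.card ≤ k - 1 := by
    intro S hS
    obtain ⟨R, hR, rfl⟩ := Finset.mem_image.1 hS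
    refine ⟨Finset.subset_univ _, ?_⟩
    rw [hφcard R hR]
    exact Nat.sub_le_sub_right (hB R hR).2.2 1
  have h4 := fourth_moment_bound Finset.univ (k - 1) A a hcond
  rw [← hp] at h4
  have h2 : II (p ^ 2) = ∑ S ∈ A, (a S) ^ 2 * (3⁻¹ : ℝ) ^ S.card := by
    rw [hp]; exact II_sq_eq A a
  have h2ge : (3⁻¹ : ℝ) ^ (k - 1) * ∑ R ∈ B, (u R) ^ 2 ≤ II (p ^ 2) := by
    rw [h2, hA, Finset.sum_image hφinj, Finset.mul_sum]
    refine Finset.sum_le_sum fun R hR => ?_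
    rw [haφ R hR, hφcard R hR]
    rw [mul_comm ((3:ℝ)⁻¹ ^ (k-1)) _]
    refine mul_le_mul_of_nonneg_left ?_ (sq_nonneg _)
    exact pow_le_pow_of_le_one (by norm_num) (by norm_num)
      (Nat.sub_le_sub_right (hB R hR).2.2 1)
  have hpos : 0 < II (p ^ 2) := lt_of_lt_of_le (mul_pos (by positivity) hu) h2ge
  have hfm := first_moment_lower p (k - 1) h4 hpos
  rw [htrans]
  refine le_trans ?_ hfm
  -- numeric estimate
  have ht0 : 0 ≤ t := ht.1
  have ht1 : t ≤ 1 := ht.2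
  have ht2 : t ^ 2 ≤ 1 := by nlinarith
  have h12 : (1 - t ^ 2) ^ 2 ≤ 1 := by nlinarith [sq_nonneg t]
  have htt : t * (1 - t ^ 2) ^ 2 ≤ 1 := by
    nlinarith [mul_nonneg (sub_nonneg.2 ht1) (sq_nonneg (1 - t^2)), sq_nonneg (1 - t^2)]
  have httn : 0 ≤ t * (1 - t ^ 2) ^ 2 := by nlinarith [sq_nonneg (1 - t^2)]
  have hfrac : t * (1 - t ^ 2) ^ 2 / 9 ^ (k - 1) ≤ 1 / 3 ^ (k - 1) := by
    have h93 : (3:ℝ) ^ (k-1) ≤ 9 ^ (k-1) := by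
      exact pow_le_pow_left₀ (by norm_num) (by norm_num) _
    have h3p : (0:ℝ) < 3 ^ (k-1) := by positivity
    have h9p : (0:ℝ) < 9 ^ (k-1) := by positivity
    rw [div_le_div_iff₀ h9p h3p]
    calc t * (1 - t ^ 2) ^ 2 * 3 ^ (k-1) ≤ 1 * 3 ^ (k-1) := by
          exact mul_le_mul_of_nonneg_right htt h3p.le
      _ = 3 ^ (k-1) := by ring
      _ ≤ 9 ^ (k-1) := h93
      _ = 1 * 9 ^ (k-1) := by ring
  have hsq : Real.sqrt ((3⁻¹:ℝ) ^ (k-1)) * Real.sqrt (∑ R ∈ B, (u R) ^ 2)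
      = Real.sqrt ((3⁻¹:ℝ) ^ (k-1) * ∑ R ∈ B, (u R) ^ 2) := by
    rw [← Real.sqrt_mul (by positivity)]
  have hmono : Real.sqrt ((3⁻¹:ℝ) ^ (k-1) * ∑ R ∈ B, (u R) ^ 2) ≤ Real.sqrt (II (p ^ 2)) :=
    Real.sqrt_le_sqrt h2ge
  calc t * (1 - t ^ 2) ^ 2 / 9 ^ (k - 1) * Real.sqrt ((3 : ℝ)⁻¹ ^ (k - 1)) *
          Real.sqrt (∑ R ∈ B, (u R) ^ 2)
      = t * (1 - t ^ 2) ^ 2 / 9 ^ (k - 1) *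
          (Real.sqrt ((3⁻¹:ℝ) ^ (k-1)) * Real.sqrt (∑ R ∈ B, (u R) ^ 2)) := by ring
    _ ≤ (1 / 3 ^ (k-1)) * (Real.sqrt ((3⁻¹:ℝ) ^ (k-1)) * Real.sqrt (∑ R ∈ B, (u R) ^ 2)) := by
        refine mul_le_mul_of_nonneg_right hfrac ?_
        positivity
    _ = (1 / 3 ^ (k-1)) * Real.sqrt ((3⁻¹:ℝ) ^ (k-1) * ∑ R ∈ B, (u R) ^ 2) := by rw [hsq]
    _ ≤ (1 / 3 ^ (k-1)) * Real.sqrt (II (p ^ 2)) := by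
        refine mul_le_mul_of_nonneg_left hmono (by positivity)
    _ = Real.sqrt (II (p ^ 2)) / 3 ^ (k-1) := by ring
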